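/- For 1 ≤ k ≤ t-1 and weak compositions λ (of d-t+1, t parts), μ (of d-t, t+1 parts), with g_k, h_k as in Lemma 3.1: ∑_{i≥0} binom(λ_k+1, i) · g_k(λ,μ; i) · h_k(λ,μ; i) = binom(∑_{m=1}^{k-1}(μ_m+λ_m)+μ_k+μ_{k+1}+2k-1, μ_k - λ_k + μ_{k+1} + 1) · binom(μ_k+μ_{k+1}+2, μ_{k+1}+1). -/

import Mathlib

open Finset

/-- Generalized binomial coefficient `binom(a, b)` for integers `a, b`:
`a(a-1)⋯(a-b+1)/b!` when `b ≥ 0`, and `0` when `b < 0`. -/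
noncomputable def zbinom (a b : ℤ) : ℤ := if 0 ≤ b then Ring.choose a b.toNat else 0


/-- Integer-lower-index binomial with natural top. -/
def B (n : ℕ) (r : ℤ) : ℤ := if 0 ≤ r then (n.choose r.toNat : ℤ) else 0

lemma zbinom_natCast (n : ℕ) (r : ℤ) : zbinom (n : ℤ) r = B n r := by
  unfold zbinom B
  split <;> simp [Ring.choose_natCast]

lemma B_neg {n : ℕ} {r : ℤ} (h : r < 0) : B n r = 0 := by
  simp [B, not_le.mpr h]

lemma B_natCast (n m : ℕ) : B n (m : ℤ) = (n.choose m : ℤ) := by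
  simp [B]

lemma B_zero_of_lt {n : ℕ} {r : ℤ} (h : (n : ℤ) < r) : B n r = 0 := by
  have h0 : 0 ≤ r := le_trans (Int.natCast_nonneg n) h.le
  rw [B, if_pos h0, Nat.choose_eq_zero_of_lt, Int.natCast_zero]
  omega

lemma B_symm (n : ℕ) (r : ℤ) : B n ((n : ℤ) - r) = B n r := by
  rcases lt_or_ge r 0 with h | h
  · rw [B_neg h, B_zero_of_lt (by omega)]
  rcases le_or_gt r (n : ℤ) with h2 | h2
  · rw [B, if_pos (by omega), B, if_pos h]
    have : ((n : ℤ) - r).toNat = n - r.toNat := by omega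
    rw [this, Nat.choose_symm (by omega)]
  · rw [B_zero_of_lt h2, B_neg (by omega)]

lemma vand (p q : ℕ) (r : ℤ) {N : ℕ} (hN : p < N) :
    ∑ s ∈ range N, B p s * B q (r - s) = B (p + q) r := by
  rcases lt_or_ge r 0 with h | h
  · rw [B_neg h]
    refine Finset.sum_eq_zero fun s _ => ?_
    rw [B_neg (by omega : r - (s : ℤ) < 0), mul_zero]
  · set rn := r.toNat with hrn
    have hr : (rn : ℤ) = r := Int.toNat_of_nonneg h
    have key : ((p + q).choose rn : ℤ)
        = ∑ s ∈ range (rn + 1), (p.choose s : ℤ) * (q.choose (rn - s) : ℤ) := by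
      rw [Nat.add_choose_eq, Finset.Nat.sum_antidiagonal_eq_sum_range_succ_mk]
      push_cast
      rfl
    set M := max N (rn + 1) with hM
    have e1 : ∑ s ∈ range N, B p s * B q (r - s) = ∑ s ∈ range M, B p s * B q (r - s) := by
      refine Finset.sum_subset (range_subset_range.2 (le_max_left _ _)) fun s hs hns => ?_
      simp only [mem_range, not_lt] at hns
      rw [B_zero_of_lt (by exact_mod_cast hN.trans_le hns), zero_mul]
    have e2 : ∑ s ∈ range (rn + 1), B p s * B q (r - s)
        = ∑ s ∈ range M, B p s * B q (r - s) := by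
      refine Finset.sum_subset (range_subset_range.2 (le_max_right _ _)) fun s hs hns => ?_
      simp only [mem_range, not_lt] at hns
      rw [B_neg (by omega : r - (s : ℤ) < 0), mul_zero]
    rw [e1, ← e2, B, if_pos h, ← hrn, key]
    refine Finset.sum_congr rfl fun s hs => ?_
    simp only [mem_range] at hs
    have h1 : r - (s : ℤ) = ((rn - s : ℕ) : ℤ) := by omega
    rw [h1, B_natCast, B_natCast]

lemma tri1 (b i : ℕ) (r : ℤ) (hib : i ≤ b) :
    B b i * B (b - i) (r - i) = B b r * B r.toNat i := by
  rcases lt_or_ge r 0 with h | h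
  · rw [B_neg (show r - (i : ℤ) < 0 by omega), B_neg h, mul_zero, zero_mul]
  set rn := r.toNat with hrn
  have hr : (rn : ℤ) = r := Int.toNat_of_nonneg h
  rcases lt_or_ge rn i with hri | hri
  · rw [show B rn (i : ℤ) = 0 from B_zero_of_lt (by exact_mod_cast hri), mul_zero,
      B_neg (show r - (i : ℤ) < 0 by omega), mul_zero]
  · have h1 : r - (i : ℤ) = ((rn - i : ℕ) : ℤ) := by omega
    rw [h1, ← hr, B_natCast, B_natCast, B_natCast, B_natCast]
    rcases le_or_gt rn b with hrb | hrb
    · have := Nat.choose_mul (n := b) hri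
      rw [← Nat.cast_mul, ← Nat.cast_mul, ← this]
    · rw [Nat.choose_eq_zero_of_lt (by omega : b - i < rn - i),
        Nat.choose_eq_zero_of_lt hrb]
      push_cast
      ring

lemma tri2 (n m k : ℕ) : n.choose m * (n - m).choose k = n.choose k * (n - k).choose m := by
  rcases le_or_gt (m + k) n with h | h
  · have h1 := Nat.choose_mul (n := n) (Nat.le_add_right m k)
    have h2 := Nat.choose_mul (n := n) (Nat.le_add_left k m)
    rw [Nat.add_sub_cancel_left] at h1
    rw [Nat.add_sub_cancel] at h2
    rw [← h1, ← h2, Nat.choose_symm_add]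
  · have l : n.choose m * (n - m).choose k = 0 := by
      rcases le_or_gt m n with hm | hm
      · rw [Nat.choose_eq_zero_of_lt (by omega : n - m < k), mul_zero]
      · rw [Nat.choose_eq_zero_of_lt hm, zero_mul]
    have rr : n.choose k * (n - k).choose m = 0 := by
      rcases le_or_gt k n with hk | hk
      · rw [Nat.choose_eq_zero_of_lt (by omega : n - k < m), mul_zero]
      · rw [Nat.choose_eq_zero_of_lt hk, zero_mul]
    rw [l, rr]

lemma key (y a b c : ℕ) (hb : 1 ≤ b) :
    ∑ i ∈ range (b + 1),
        B b i * B (y + a) ((y : ℤ) + b - 1 - i) * B (y + a + b + c - i) ((c : ℤ) - i)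
      = B (y + a + c) ((y : ℤ) + b - 1) * B (a + c + 1) (c : ℤ) := by
  have hK : ((y + b - 1 : ℕ) : ℤ) = (y : ℤ) + b - 1 := by omega
  calc
    ∑ i ∈ range (b + 1),
        B b i * B (y + a) ((y : ℤ) + b - 1 - i) * B (y + a + b + c - i) ((c : ℤ) - i)
      = ∑ i ∈ range (b + 1), ∑ m ∈ range (y + a + c + 1),
          B (y + a + c) m * (B b i * B (b - i) ((c : ℤ) - i - m))
            * B (y + a) ((y : ℤ) + b - 1 - i) := by
        refine sum_congr rfl fun i hi => ?_
        have hib : i ≤ b := by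
          have := mem_range.mp hi; omega
        have hv := vand (y + a + c) (b - i) ((c : ℤ) - i) (N := y + a + c + 1)
          (Nat.lt_succ_self _)
        rw [show y + a + c + (b - i) = y + a + b + c - i by omega] at hv
        rw [← hv, mul_sum]
        refine sum_congr rfl fun m hm => ?_
        ring
    _ = ∑ m ∈ range (y + a + c + 1), ∑ i ∈ range (b + 1),
          B (y + a + c) m * (B b i * B (b - i) ((c : ℤ) - i - m))
            * B (y + a) ((y : ℤ) + b - 1 - i) := sum_comm
    _ = ∑ m ∈ range (y + a + c + 1),
          B (y + a + c) ((y : ℤ) + b - 1)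
            * (B (y + a + c - (y + b - 1)) m * B b ((c : ℤ) - m)) := by
        refine sum_congr rfl fun m hm => ?_
        rcases lt_or_ge ((c : ℤ) - m) 0 with hcm | hcm
        · rw [B_neg hcm, mul_zero, mul_zero]
          refine sum_eq_zero fun i hi => ?_
          rw [B_neg (show (c : ℤ) - i - m < 0 by omega), mul_zero, mul_zero, zero_mul]
        · have hmc : m ≤ c := by omega
          have hc1 : (c : ℤ) - m = ((c - m : ℕ) : ℤ) := by omega
          have e : ∀ i ∈ range (b + 1),
              B (y + a + c) m * (B b i * B (b - i) ((c : ℤ) - i - m))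
                  * B (y + a) ((y : ℤ) + b - 1 - i)
                = (B (y + a + c) m * B b ((c - m : ℕ) : ℤ))
                  * (B (c - m) i * B (y + a) ((y : ℤ) + b - 1 - i)) := by
            intro i hi
            have hib : i ≤ b := by
              have := mem_range.mp hi; omega
            have ht := tri1 b i ((c - m : ℕ) : ℤ) hib
            rw [Int.toNat_natCast] at ht
            rw [show (c : ℤ) - i - m = ((c - m : ℕ) : ℤ) - i by omega, ht]
            ring
          rw [sum_congr rfl e, ← mul_sum]
          rcases le_or_gt (c - m) b with hcb | hcb
          · rw [vand (c - m) (y + a) ((y : ℤ) + b - 1) (N := b + 1) (by omega)]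
            rw [hc1, ← hK, show c - m + (y + a) = y + a + c - m by omega]
            rw [B_natCast, B_natCast, B_natCast, B_natCast, B_natCast]
            have h2 := tri2 (y + a + c) m (y + b - 1)
            zify at h2
            linear_combination ((b.choose (c - m) : ℤ)) * h2
          · rw [show B b ((c - m : ℕ) : ℤ) = 0 from B_zero_of_lt (by exact_mod_cast hcb),
              mul_zero, zero_mul, hc1,
              show B b ((c - m : ℕ) : ℤ) = 0 from B_zero_of_lt (by exact_mod_cast hcb),
              mul_zero, mul_zero]
    _ = B (y + a + c) ((y : ℤ) + b - 1) * B (a + c + 1) (c : ℤ) := by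
        rw [← mul_sum, vand (y + a + c - (y + b - 1)) b (c : ℤ) (N := y + a + c + 1) (by omega)]
        rcases le_or_gt b (a + c + 1) with hb2 | hb2
        · rw [show y + a + c - (y + b - 1) + b = a + c + 1 by omega]
        · rw [B_zero_of_lt (show ((y + a + c : ℕ) : ℤ) < (y : ℤ) + b - 1 by push_cast; omega),
            zero_mul, zero_mul]

/-- `S(s) = ∑_{m=1}^{s} (μ_m + λ_m)`. -/
def Sfun (lam mu : ℕ → ℕ) (s : ℕ) : ℤ := ∑ m ∈ Finset.Icc 1 s, ((mu m : ℤ) + (lam m : ℤ))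

/-- `A_k(λ,μ) = ∏_{s=0}^{k-2} binom(S(s)+μ_{s+1}+2s, S(s)+λ_{s+1}+2s)`. -/
noncomputable def Afun (lam mu : ℕ → ℕ) (k : ℕ) : ℤ :=
  ∏ s ∈ Finset.range (k - 1),
    zbinom (Sfun lam mu s + (mu (s+1) : ℤ) + 2 * s) (Sfun lam mu s + (lam (s+1) : ℤ) + 2 * s)

/-- `B_k(λ,μ) = ∏_{s=k+1}^{t-1} binom(S(s-1)+μ_s+μ_{s+1}+2s-1, S(s)+2s-1)`. -/
noncomputable def Bfun (t : ℕ) (lam mu : ℕ → ℕ) (k : ℕ) : ℤ :=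
  ∏ s ∈ Finset.Icc (k + 1) (t - 1),
    zbinom (Sfun lam mu (s - 1) + (mu s : ℤ) + (mu (s+1) : ℤ) + 2 * s - 1)
      (Sfun lam mu s + 2 * s - 1)

/-- `g_k(λ,μ;z) = binom(S(k-1)+μ_k+2(k-1), S(k-1)+λ_k-z+2(k-1))`. -/
noncomputable def gfun (lam mu : ℕ → ℕ) (k : ℕ) (z : ℤ) : ℤ :=
  zbinom (Sfun lam mu (k - 1) + (mu k : ℤ) + 2 * ((k : ℤ) - 1))
    (Sfun lam mu (k - 1) + (lam k : ℤ) - z + 2 * ((k : ℤ) - 1))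

/-- `h_k(λ,μ;z) = binom(S(k)+μ_{k+1}-z+2(k-1)+2, S(k)+2(k-1)+1)`. -/
noncomputable def hfun (lam mu : ℕ → ℕ) (k : ℕ) (z : ℤ) : ℤ :=
  zbinom (Sfun lam mu k + (mu (k+1) : ℤ) - z + 2 * ((k : ℤ) - 1) + 2)
    (Sfun lam mu k + 2 * ((k : ℤ) - 1) + 1)

/-- The second summation computation in Step 3 of the proof of Theorem 1.1:
`∑_{i≥0} binom(λ_k+1, i) g_k(λ,μ;i) h_k(λ,μ;i)
  = binom(S(k-1)+μ_k+μ_{k+1}+2k-1, μ_k-λ_k+μ_{k+1}+1) · binom(μ_k+μ_{k+1}+2, μ_{k+1}+1)`.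
The sum is finite: terms with `i > λ_k + 1` vanish. -/
theorem stmt18 (d t : ℕ) (ht : 1 ≤ t) (lam mu : ℕ → ℕ)
    (hlam : ∑ m ∈ Finset.Icc 1 t, (lam m : ℤ) = (d : ℤ) - t + 1)
    (hmu : ∑ m ∈ Finset.Icc 1 (t + 1), (mu m : ℤ) = (d : ℤ) - t)
    (k : ℕ) (hk : 1 ≤ k) (hkt : k ≤ t - 1) :
    ∑ i ∈ Finset.range (lam k + 2),
        zbinom ((lam k : ℤ) + 1) i * gfun lam mu k i * hfun lam mu k i =
      zbinom (Sfun lam mu (k - 1) + (mu k : ℤ) + (mu (k + 1) : ℤ) + 2 * k - 1)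
          ((mu k : ℤ) - (lam k : ℤ) + (mu (k + 1) : ℤ) + 1) *
        zbinom ((mu k : ℤ) + (mu (k + 1) : ℤ) + 2) ((mu (k + 1) : ℤ) + 1) := by
  have hS0 : 0 ≤ Sfun lam mu (k - 1) :=
    Finset.sum_nonneg fun m _ => by positivity
  have hSk : Sfun lam mu k = Sfun lam mu (k - 1) + mu k + lam k := by
    obtain ⟨j, rfl⟩ : ∃ j, k = j + 1 := ⟨k - 1, by omega⟩
    simp only [Nat.add_sub_cancel, Sfun]
    rw [Finset.sum_Icc_succ_top (by omega)]
    ring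
  obtain ⟨y, hy⟩ : ∃ y : ℕ, (y : ℤ) = Sfun lam mu (k - 1) + 2 * ((k : ℤ) - 1) :=
    ⟨(Sfun lam mu (k - 1)).toNat + 2 * (k - 1), by omega⟩
  have hL : ∀ i ∈ range ((lam k + 1) + 1),
      zbinom ((lam k : ℤ) + 1) i * gfun lam mu k i * hfun lam mu k i
        = B (lam k + 1) i * B (y + mu k) ((y : ℤ) + ((lam k + 1 : ℕ) : ℤ) - 1 - i)
            * B (y + mu k + (lam k + 1) + (mu (k+1) + 1) - i) (((mu (k+1) + 1 : ℕ) : ℤ) - i) := by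
    intro i hi
    have hib : i ≤ lam k + 1 := by
      have := mem_range.mp hi; omega
    have e1 : ((lam k : ℤ) + 1) = ((lam k + 1 : ℕ) : ℤ) := by push_cast; ring
    have e2 : gfun lam mu k i = B (y + mu k) ((y : ℤ) + ((lam k + 1 : ℕ) : ℤ) - 1 - i) := by
      unfold gfun
      rw [show Sfun lam mu (k - 1) + (mu k : ℤ) + 2 * ((k : ℤ) - 1) = ((y + mu k : ℕ) : ℤ) by
            omega,
          show Sfun lam mu (k - 1) + (lam k : ℤ) - i + 2 * ((k : ℤ) - 1)
              = (y : ℤ) + ((lam k + 1 : ℕ) : ℤ) - 1 - i by omega,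
          zbinom_natCast]
    have e3 : hfun lam mu k i
        = B (y + mu k + (lam k + 1) + (mu (k+1) + 1) - i) (((mu (k+1) + 1 : ℕ) : ℤ) - i) := by
      unfold hfun
      rw [hSk,
          show Sfun lam mu (k - 1) + (mu k : ℤ) + (lam k : ℤ) + (mu (k+1) : ℤ) - i
                + 2 * ((k : ℤ) - 1) + 2
              = ((y + mu k + (lam k + 1) + (mu (k+1) + 1) - i : ℕ) : ℤ) by omega,
          show Sfun lam mu (k - 1) + (mu k : ℤ) + (lam k : ℤ) + 2 * ((k : ℤ) - 1) + 1
              = ((y + mu k + (lam k + 1) + (mu (k+1) + 1) - i : ℕ) : ℤ)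
                - (((mu (k+1) + 1 : ℕ) : ℤ) - i) by omega,
          zbinom_natCast, B_symm]
    rw [e1, e2, e3, zbinom_natCast]
  have eR1 : zbinom (Sfun lam mu (k - 1) + (mu k : ℤ) + (mu (k + 1) : ℤ) + 2 * k - 1)
        ((mu k : ℤ) - (lam k : ℤ) + (mu (k + 1) : ℤ) + 1)
      = B (y + mu k + (mu (k+1) + 1)) ((y : ℤ) + ((lam k + 1 : ℕ) : ℤ) - 1) := by
    rw [show Sfun lam mu (k - 1) + (mu k : ℤ) + (mu (k + 1) : ℤ) + 2 * k - 1
            = ((y + mu k + (mu (k+1) + 1) : ℕ) : ℤ) by omega,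
        show (mu k : ℤ) - (lam k : ℤ) + (mu (k + 1) : ℤ) + 1
            = ((y + mu k + (mu (k+1) + 1) : ℕ) : ℤ) - ((y : ℤ) + ((lam k + 1 : ℕ) : ℤ) - 1) by omega,
        zbinom_natCast, B_symm]
  have eR2 : zbinom ((mu k : ℤ) + (mu (k + 1) : ℤ) + 2) ((mu (k + 1) : ℤ) + 1)
      = B (mu k + (mu (k+1) + 1) + 1) ((mu (k+1) + 1 : ℕ) : ℤ) := by
    rw [show (mu k : ℤ) + (mu (k + 1) : ℤ) + 2 = ((mu k + (mu (k+1) + 1) + 1 : ℕ) : ℤ) by omega,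
        show (mu (k + 1) : ℤ) + 1 = ((mu (k+1) + 1 : ℕ) : ℤ) by omega,
        zbinom_natCast]
  rw [show lam k + 2 = (lam k + 1) + 1 by omega, Finset.sum_congr rfl hL,
    key y (mu k) (lam k + 1) (mu (k+1) + 1) (by omega), eR1, eR2]
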